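/- Under the hypotheses of Lemma 4.3 (X path-connected semi-locally small loop, p : X̃ → X a covering with p₋(π₁(X̃,x̃)) = π₁ˢ(X,x) for one x̃ over x), the equality p₋(π₁(X̃, ỹ)) = π₁ˢ(X, p(ỹ)) holds for every point ỹ ∈ X̃. -/

import Mathlib

open CategoryTheory Topology

attribute [local instance] Path.Homotopic.setoid

noncomputable section

variable {X Y E : Type*} [TopologicalSpace X] [TopologicalSpace Y] [TopologicalSpace E]

/-- Build an element of the fundamental group from a homotopy class of loops. -/
def fromLoop {x : X} (p : Path.Homotopic.Quotient x x) : FundamentalGroup X x :=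
  FundamentalGroup.fromPath p

/-- The homotopy class of loops underlying an element of the fundamental group. -/
def toLoop {x : X} (γ : FundamentalGroup X x) : Path.Homotopic.Quotient x x :=
  FundamentalGroup.toPath γ

/-- A fundamental group element is *small* if it has a loop representative inside every
neighborhood of the basepoint. -/
def IsSmall {x : X} (γ : FundamentalGroup X x) : Prop :=
  ∀ U ∈ nhds x, ∃ δ : Path x x, (∀ t, δ t ∈ U) ∧ fromLoop ⟦δ⟧ = γ

/-- The set of small loop classes, i.e. the carrier of the small loop group `π₁ˢ(X,x)`. -/
def smallSet (X : Type*) [TopologicalSpace X] (x : X) : Set (FundamentalGroup X x) :=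
  {γ | IsSmall γ}

/-- Conjugate of a loop class at `y` by a path `α` from `x` to `y`: `α * β * α⁻¹`. -/
def conjPath {x y : X} (α : Path x y) (β : FundamentalGroup X y) : FundamentalGroup X x :=
  fromLoop (Path.Homotopic.Quotient.trans
    (Path.Homotopic.Quotient.trans (⟦α⟧ : Path.Homotopic.Quotient x y) (toLoop β))
    (⟦α.symm⟧ : Path.Homotopic.Quotient y x))

/-- The SG subgroup `π₁ˢᵍ(X,x)`: generated by conjugates of small loop classes. -/
def sgSubgroup (X : Type*) [TopologicalSpace X] (x : X) : Subgroup (FundamentalGroup X x) :=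
  Subgroup.closure {g | ∃ (y : X) (α : Path x y) (β : FundamentalGroup X y), IsSmall β ∧ g = conjPath α β}

/-- The map induced on fundamental groups by a continuous map. -/
def piMap (f : C(X, Y)) (x : X) (γ : FundamentalGroup X x) : FundamentalGroup Y (f x) :=
  fromLoop (Path.Homotopic.Quotient.map (toLoop γ) f)

/-- A small loop space: a path-connected, non-simply connected space all of whose loops
are small. -/
def IsSmallLoopSpace (X : Type*) [TopologicalSpace X] : Prop :=
  PathConnectedSpace X ∧ ¬ SimplyConnectedSpace X ∧
    ∀ (x : X) (γ : FundamentalGroup X x), IsSmall γ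

/-- A space is homotopically Hausdorff if every nontrivial loop class can be kept away from
some neighborhood of its basepoint. -/
def HomotopicallyHausdorff (X : Type*) [TopologicalSpace X] : Prop :=
  ∀ (x : X) (γ : FundamentalGroup X x), γ ≠ 1 →
    ∃ U ∈ nhds x, ∀ δ : Path x x, (∀ t, δ t ∈ U) → fromLoop ⟦δ⟧ ≠ γ

/-- The image of `π₁(U,y) → π₁(X,y)`: classes of loops having a representative inside `U`. -/
def loopsIn (U : Set X) (y : X) : Set (FundamentalGroup X y) :=
  {γ | ∃ δ : Path y y, (∀ t, δ t ∈ U) ∧ fromLoop ⟦δ⟧ = γ}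

/-- A semi-locally small loop space. -/
def SemiLocallySmallLoop (X : Type*) [TopologicalSpace X] : Prop :=
  ∀ x : X, ∃ U : Set X, IsOpen U ∧ x ∈ U ∧ ∀ y ∈ U, loopsIn U y = smallSet X y



section Aux

lemma Path.Homotopic.comp_lift {x y z : X} (a : Path x y) (b : Path y z) :
    (⟦a.trans b⟧ : Path.Homotopic.Quotient x z) =
      Path.Homotopic.Quotient.trans (⟦a⟧ : Path.Homotopic.Quotient x y) ⟦b⟧ := rfl

lemma Path.Homotopic.map_lift {x y : X} (a : Path x y) (f : C(X, Y)) :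
    (⟦a.map f.continuous⟧ : Path.Homotopic.Quotient (f x) (f y)) =
      Path.Homotopic.Quotient.map (⟦a⟧ : Path.Homotopic.Quotient x y) f := rfl

open unitInterval

variable {x y z w c d : X}

lemma toLoop_fromLoop {x : X} (p : Path.Homotopic.Quotient x x) : toLoop (fromLoop p) = p := rfl

lemma fromLoop_toLoop {x : X} (γ : FundamentalGroup X x) : fromLoop (toLoop γ) = γ :=
  rfl

lemma qcomp_assoc (p : Path.Homotopic.Quotient x y) (q : Path.Homotopic.Quotient y z)
    (r : Path.Homotopic.Quotient z w) :
    (p.trans q).trans r = p.trans (q.trans r) := by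
  refine Quotient.inductionOn₃ p q r fun a b c => ?_
  rw [← Path.Homotopic.comp_lift, ← Path.Homotopic.comp_lift, ← Path.Homotopic.comp_lift,
    ← Path.Homotopic.comp_lift]
  exact Quotient.sound ⟨Path.Homotopy.transAssoc a b c⟩

lemma qcomp_refl (p : Path.Homotopic.Quotient x y) :
    Path.Homotopic.Quotient.trans p (⟦Path.refl y⟧ : Path.Homotopic.Quotient y y) = p := by
  refine Quotient.inductionOn p fun a => ?_
  rw [← Path.Homotopic.comp_lift]
  exact Quotient.sound ⟨Path.Homotopy.transRefl a⟩

lemma refl_qcomp (p : Path.Homotopic.Quotient x y) :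
    Path.Homotopic.Quotient.trans (⟦Path.refl x⟧ : Path.Homotopic.Quotient x x) p = p := by
  refine Quotient.inductionOn p fun a => ?_
  rw [← Path.Homotopic.comp_lift]
  exact Quotient.sound ⟨Path.Homotopy.reflTrans a⟩

lemma mapFn_qcomp (p : Path.Homotopic.Quotient x y) (q : Path.Homotopic.Quotient y z) (f : C(X, Y)) :
    (p.trans q).map f = (p.map f).trans (q.map f) := by
  refine Quotient.inductionOn₂ p q fun a b => ?_
  rw [← Path.Homotopic.comp_lift, ← Path.Homotopic.map_lift, ← Path.Homotopic.map_lift,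
    ← Path.Homotopic.map_lift, ← Path.Homotopic.comp_lift, Path.map_trans]

lemma mapFn_symm (a : Path x y) (f : C(X, Y)) :
    Path.Homotopic.Quotient.map (⟦a.symm⟧ : Path.Homotopic.Quotient y x) f
      = ⟦(a.map f.continuous).symm⟧ := by
  rw [← Path.Homotopic.map_lift, Path.map_symm]

lemma conj_homotopic {α β : Path x y} (h : α.Homotopic β) (g : FundamentalGroup X y) :
    conjPath α g = conjPath β g := by
  have h2 : α.symm.Homotopic β.symm := Nonempty.map Path.Homotopy.symm₂ h
  unfold conjPath
  rw [show (⟦α⟧ : Path.Homotopic.Quotient x y) = ⟦β⟧ from Quotient.sound h,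
    show (⟦α.symm⟧ : Path.Homotopic.Quotient y x) = ⟦β.symm⟧ from Quotient.sound h2]

lemma conj_trans (a : Path x y) (b : Path y z) (g : FundamentalGroup X z) :
    conjPath (a.trans b) g = conjPath a (conjPath b g) := by
  unfold conjPath
  rw [toLoop_fromLoop]
  congr 1
  rw [Path.trans_symm, Path.Homotopic.comp_lift, Path.Homotopic.comp_lift]
  erw [qcomp_assoc, qcomp_assoc, qcomp_assoc, qcomp_assoc, qcomp_assoc]

lemma conj_refl (g : FundamentalGroup X x) : conjPath (Path.refl x) g = g := by
  unfold conjPath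
  rw [Path.refl_symm, qcomp_refl, refl_qcomp, fromLoop_toLoop]

lemma conj_symm_conj (a : Path x y) (g : FundamentalGroup X y) :
    conjPath a.symm (conjPath a g) = g := by
  rw [← conj_trans]
  have h : (a.symm.trans a).Homotopic (Path.refl y) := ⟨(Path.Homotopy.reflSymmTrans a).symm⟩
  rw [conj_homotopic h, conj_refl]

lemma conj_conj_symm (a : Path x y) (g : FundamentalGroup X x) :
    conjPath a (conjPath a.symm g) = g := by
  have := conj_symm_conj a.symm g
  rwa [Path.symm_symm] at this

lemma piMap_conj (f : C(X, Y)) {x y : X} (α : Path x y) (γ : FundamentalGroup X y) :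
    piMap f x (conjPath α γ) = conjPath (α.map f.continuous) (piMap f y γ) := by
  unfold piMap conjPath
  rw [toLoop_fromLoop, toLoop_fromLoop]
  congr 1
  erw [mapFn_qcomp, mapFn_qcomp, mapFn_symm, ← Path.Homotopic.map_lift]

lemma conj_cast {x a b : X} (h : b = a) (sg : Path x a) (g : FundamentalGroup X b) :
    conjPath (sg.cast rfl h) g = conjPath sg (h ▸ g) := by subst h; rfl

lemma isSmall_transport {a b : X} (h : a = b) (g : FundamentalGroup X a) (hg : IsSmall g) :
    IsSmall (h ▸ g) := by subst h; exact hg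

lemma homotopic_of_extend (γ : Path x y) (φ ψ : C(I, ℝ))
    (h0 : φ 0 = ψ 0) (h1 : φ 1 = ψ 1) (p q : Path c d)
    (hp : ∀ s, p s = γ.extend (φ s)) (hq : ∀ s, q s = γ.extend (ψ s)) : p.Homotopic q := by
  refine ⟨{ toFun := fun uv => γ.extend ((1 - (uv.1 : ℝ)) * φ uv.2 + (uv.1 : ℝ) * ψ uv.2)
            continuous_toFun := by fun_prop
            map_zero_left := fun s => by simp [hp s]
            map_one_left := fun s => by simp [hq s]
            prop' := fun t s hs => by
              rcases hs with rfl | rfl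
              · simp [hp, h0]; ring_nf
              · simp [hp, h1]; ring_nf }⟩

def segPath (α : Path x y) (s t : I) (h : s ≤ t) : Path (α s) (α t) :=
  (α.truncate s t).cast
    (by rw [min_eq_left (by exact_mod_cast h : (s : ℝ) ≤ t)]; exact (α.extend_extends' s).symm)
    (α.extend_extends' t).symm

lemma segPath_coe (α : Path x y) (s t : I) (h : s ≤ t) (v : I) :
    segPath α s t h v = α.extend (min (max ↑v ↑s) ↑t) := rfl

def seg0 (α : Path x y) (t : I) : Path x (α t) :=
  (α.truncate 0 t).cast
    (by rw [min_eq_left (by exact_mod_cast t.2.1 : (0 : ℝ) ≤ t)]; exact α.extend_zero.symm)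
    (α.extend_extends' t).symm

lemma seg0_coe (α : Path x y) (t : I) (v : I) :
    seg0 α t v = α.extend (min (max ↑v 0) ↑t) := rfl

lemma seg0_zero_coe (α : Path x y) (v : I) : seg0 α 0 v = x := by
  show α.extend (min (max (v:ℝ) 0) ((0:I):ℝ)) = x
  have h0 : ((0:I):ℝ) = 0 := rfl
  rw [h0, max_eq_left v.2.1, min_eq_right v.2.1, α.extend_zero]

lemma segPath_mem (α : Path x y) (s t : I) (h : s ≤ t) {U : Set X}
    (hU : ∀ r : I, s ≤ r → r ≤ t → α r ∈ U) (v : I) : segPath α s t h v ∈ U := by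
  rw [segPath_coe]
  set r : ℝ := min (max ↑v ↑s) ↑t with hr
  have hsr : (s : ℝ) ≤ r := le_min (le_max_right _ _) (by exact_mod_cast h)
  have hrt : r ≤ (t : ℝ) := min_le_right _ _
  have h0 : (0 : ℝ) ≤ r := le_trans s.2.1 hsr
  have h1 : r ≤ 1 := le_trans hrt t.2.2
  rw [α.extend_apply ⟨h0, h1⟩]
  exact hU ⟨r, h0, h1⟩ hsr hrt

lemma seg0_trans_seg (α : Path x y) (u v : I) (h : u ≤ v) :
    ((seg0 α u).trans (segPath α u v h)).Homotopic (seg0 α v) := by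
  have hu0 : (0:ℝ) ≤ u := u.2.1
  have hu1 : (u:ℝ) ≤ 1 := u.2.2
  have hv0 : (0:ℝ) ≤ v := v.2.1
  have hv1 : (v:ℝ) ≤ 1 := v.2.2
  have huv : (u:ℝ) ≤ v := by exact_mod_cast h
  have hcont : Continuous (fun s : I =>
      if (s : ℝ) ≤ 1/2 then min (max (2*(s:ℝ)) 0) ↑u else min (max (2*(s:ℝ)-1) ↑u) ↑v) := by
    apply Continuous.if_le (by fun_prop) (by fun_prop) (by fun_prop) continuous_const
    intro s hs
    rw [hs]
    norm_num
    rw [min_eq_right hu1, max_eq_right hu0, min_eq_left huv]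
  refine homotopic_of_extend α ⟨_, hcont⟩
    ⟨fun s => min (max (s:ℝ) 0) ↑v, by fun_prop⟩ ?_ ?_ _ _ ?_ ?_
  · show (if ((0:I):ℝ) ≤ 1/2 then min (max (2*((0:I):ℝ)) 0) ↑u else min (max (2*((0:I):ℝ)-1) ↑u) ↑v)
      = min (max ((0:I):ℝ) 0) ↑v
    rw [if_pos (by norm_num)]
    norm_num
    rw [min_eq_left hu0, min_eq_left hv0]
  · show (if ((1:I):ℝ) ≤ 1/2 then min (max (2*((1:I):ℝ)) 0) ↑u else min (max (2*((1:I):ℝ)-1) ↑u) ↑v)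
      = min (max ((1:I):ℝ) 0) ↑v
    rw [if_neg (by norm_num)]
    norm_num
    rw [max_eq_left hu1]
  · intro s
    rw [Path.trans_apply]
    simp only [ContinuousMap.coe_mk]
    split_ifs with hs
    · exact seg0_coe α u _
    · exact segPath_coe α u v h _
  · intro s
    simp only [ContinuousMap.coe_mk]
    exact seg0_coe α v s

lemma symm_mem {z w : X} {sg : Path z w} {U : Set X} (h : ∀ v, sg v ∈ U) : ∀ v, sg.symm v ∈ U := by
  intro v
  rw [Path.symm_apply]
  exact h _

lemma step_small {U : Set X} (hUopen : IsOpen U) (hloop : ∀ y ∈ U, loopsIn U y = smallSet X y)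
    {z w : X} (sg : Path z w) (hsg : ∀ v, sg v ∈ U) (g : FundamentalGroup X w) (hg : IsSmall g) :
    IsSmall (conjPath sg g) := by
  have hw : w ∈ U := by have := hsg 1; rwa [sg.target] at this
  have hz : z ∈ U := by have := hsg 0; rwa [sg.source] at this
  obtain ⟨δ, hδU, hδg⟩ := hg U (hUopen.mem_nhds hw)
  have hmem : ∀ v, ((sg.trans δ).trans sg.symm) v ∈ U := by
    intro v
    rw [Path.trans_apply]
    split_ifs with h1
    · rw [Path.trans_apply]
      split_ifs with h2
      · exact hsg _
      · exact hδU _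
    · exact symm_mem hsg _
  have hsm : fromLoop ⟦(sg.trans δ).trans sg.symm⟧ ∈ smallSet X z := by
    rw [← hloop z hz]; exact ⟨_, hmem, rfl⟩
  have heq : conjPath sg g = fromLoop ⟦(sg.trans δ).trans sg.symm⟧ := by
    rw [← hδg]
    unfold conjPath
    erw [toLoop_fromLoop]
    congr 1
  rw [heq]
  exact hsm

lemma transfer_small (hX : SemiLocallySmallLoop X) {x y : X} (α : Path x y)
    (g : FundamentalGroup X y) (hg : IsSmall g) : IsSmall (conjPath α g) := by
  set T : Set I :=
    {t | ∀ g' : FundamentalGroup X (α t), IsSmall g' → IsSmall (conjPath (seg0 α t) g')} with hT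
  have key : ∀ t : I, ∃ V ∈ nhds t, ∀ s ∈ V, (s ∈ T ↔ t ∈ T) := by
    intro t
    obtain ⟨U, hUopen, hUmem, hloop⟩ := hX (α t)
    have hnh : α ⁻¹' U ∈ nhds t :=
      (α.continuous.continuousAt).preimage_mem_nhds (hUopen.mem_nhds hUmem)
    obtain ⟨ε, hε, hball⟩ := Metric.mem_nhds_iff.mp hnh
    refine ⟨Metric.ball t ε, Metric.ball_mem_nhds t hε, ?_⟩
    intro s hs
    have hseg : ∀ r : I, min s t ≤ r → r ≤ max s t → α r ∈ U := by
      intro r h1 h2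
      apply hball
      rw [Metric.mem_ball]
      have hd : dist r t ≤ dist s t := by
        rw [Subtype.dist_eq, Subtype.dist_eq, Real.dist_eq, Real.dist_eq]
        rcases le_total s t with hc | hc
        · rw [min_eq_left hc] at h1; rw [max_eq_right hc] at h2
          have c1 : (s:ℝ) ≤ r := h1
          have c2 : (r:ℝ) ≤ t := h2
          have c3 : (s:ℝ) ≤ t := hc
          rw [abs_of_nonpos (by linarith), abs_of_nonpos (by linarith)]
          linarith
        · rw [min_eq_right hc] at h1; rw [max_eq_left hc] at h2
          have c1 : (t:ℝ) ≤ r := h1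
          have c2 : (r:ℝ) ≤ s := h2
          have c3 : (t:ℝ) ≤ s := hc
          rw [abs_of_nonneg (by linarith), abs_of_nonneg (by linarith)]
          linarith
      exact lt_of_le_of_lt hd (Metric.mem_ball.mp hs)
    have main : ∀ u v : I, ∀ huv : u ≤ v, (∀ r : I, u ≤ r → r ≤ v → α r ∈ U) →
        ((u ∈ T) ↔ (v ∈ T)) := by
      intro u v huv hUr
      constructor
      · intro hu g' hg'
        have h1 : IsSmall (conjPath (segPath α u v huv) g') :=
          step_small hUopen hloop _ (segPath_mem α u v huv hUr) g' hg'
        have h2 := hu _ h1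
        have h3 : conjPath (seg0 α u) (conjPath (segPath α u v huv) g')
            = conjPath (seg0 α v) g' := by
          rw [← conj_trans]
          exact conj_homotopic (seg0_trans_seg α u v huv) g'
        rwa [h3] at h2
      · intro hv g' hg'
        have h1 : IsSmall (conjPath (segPath α u v huv).symm g') :=
          step_small hUopen hloop _ (symm_mem (segPath_mem α u v huv hUr)) g' hg'
        have h2 := hv _ h1
        have h3 : conjPath (seg0 α v) (conjPath (segPath α u v huv).symm g')
            = conjPath (seg0 α u) g' := by
          rw [← conj_homotopic (seg0_trans_seg α u v huv), conj_trans, conj_conj_symm]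
        rwa [h3] at h2
    rcases le_total s t with hc | hc
    · exact main s t hc (fun r h1 h2 =>
        hseg r (by rw [min_eq_left hc]; exact h1) (by rw [max_eq_right hc]; exact h2))
    · exact (main t s hc (fun r h1 h2 =>
        hseg r (by rw [min_eq_right hc]; exact h1) (by rw [max_eq_left hc]; exact h2))).symm
  have h0T : (0:I) ∈ T := by
    intro g' hg'
    obtain ⟨U, hUopen, hUmem, hloop⟩ := hX x
    exact step_small hUopen hloop _ (fun v => by rw [seg0_zero_coe]; exact hUmem) g' hg'
  have hclopen : IsClopen T := by
    constructor
    · rw [← isOpen_compl_iff, isOpen_iff_mem_nhds]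
      intro t ht
      obtain ⟨V, hV, hiff⟩ := key t
      exact Filter.mem_of_superset hV (fun s hs hsT => ht ((hiff s hs).mp hsT))
    · rw [isOpen_iff_mem_nhds]
      intro t ht
      obtain ⟨V, hV, hiff⟩ := key t
      exact Filter.mem_of_superset hV (fun s hs => (hiff s hs).mpr ht)
  have hall : T = Set.univ := hclopen.eq_univ ⟨0, h0T⟩
  have h1T : (1:I) ∈ T := by rw [hall]; trivial
  have hy : y = α 1 := α.target.symm
  have hα : α = (seg0 α 1).cast rfl hy := by
    ext v
    rw [Path.cast_coe, seg0_coe]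
    have h1 : ((1:I):ℝ) = 1 := rfl
    rw [h1, max_eq_left v.2.1, min_eq_left v.2.2, α.extend_extends' v]
  rw [hα, conj_cast hy (seg0 α 1) g]
  exact h1T _ (isSmall_transport hy g hg)

end Aux

/-- under the hypotheses of Lemma 4.3, the equality
`p₋(π₁(X̃, yt)) = π₁ˢ(X, p yt)` holds at every point `yt` of the covering space. -/
theorem range_eq_smallSet_everywhere {E X : Type*} [TopologicalSpace E]
    [TopologicalSpace X] [PathConnectedSpace X] [PathConnectedSpace E]
    (hX : SemiLocallySmallLoop X) (p : C(E, X)) (hp : IsCoveringMap p) (xt : E)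
    (himg : Set.range (piMap p xt) = smallSet X (p xt)) :
    ∀ yt : E, Set.range (piMap p yt) = smallSet X (p yt) := by
  intro yt
  have αt : Path xt yt := PathConnectedSpace.somePath xt yt
  set α : Path (p xt) (p yt) := αt.map p.continuous with hα
  ext g
  simp only [Set.mem_range]
  constructor
  · rintro ⟨γ, rfl⟩
    show IsSmall (piMap p yt γ)
    have h1 : piMap p xt (conjPath αt γ) ∈ Set.range (piMap p xt) := ⟨_, rfl⟩
    rw [himg, piMap_conj] at h1
    have h2 := transfer_small hX α.symm _ h1
    rwa [conj_symm_conj] at h2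
  · intro hg
    have h1 : conjPath α g ∈ smallSet X (p xt) := transfer_small hX α g hg
    rw [← himg] at h1
    obtain ⟨γ, hγ⟩ := h1
    refine ⟨conjPath αt.symm γ, ?_⟩
    rw [piMap_conj, ← Path.map_symm, hγ, conj_symm_conj]


end
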